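/- The function g satisfies the subadditivity-type bound: for all x, y, N_B ≥ 0, g(x + y + N_B) − g(N_B) ≤ (g(x + N_B) − g(N_B)) + (g(y + N_B) − g(N_B)). -/

import Mathlib

/-- The bosonic entropy function `g(x) = (x+1)·log₂(x+1) − x·log₂ x`,
with the convention `g(0) = 0` (note `Real.logb 2 0 = 0`). -/
noncomputable def g (x : ℝ) : ℝ := (x + 1) * Real.logb 2 (x + 1) - x * Real.logb 2 x

/-- Auxiliary: natural-log version of `g`. -/
noncomputable def G (x : ℝ) : ℝ := (x + 1) * Real.log (x + 1) - x * Real.log x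

lemma G_continuous : Continuous G := by
  have h := Real.continuous_mul_log
  have h1 : Continuous fun x : ℝ => (x + 1) * Real.log (x + 1) :=
    h.comp (continuous_id.add continuous_const)
  exact h1.sub h

lemma G_hasDerivAt {t : ℝ} (ht : 0 < t) :
    HasDerivAt G (Real.log (t + 1) - Real.log t) t := by
  have h1 : HasDerivAt (fun x : ℝ => x * Real.log x) (Real.log t + 1) t :=
    Real.hasDerivAt_mul_log (ne_of_gt ht)
  have h2 : HasDerivAt (fun x : ℝ => (x + 1) * Real.log (x + 1))
      (Real.log (t + 1) + 1) t := by
    have hadd : HasDerivAt (fun x : ℝ => x + 1) 1 t := (hasDerivAt_id t).add_const 1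
    have h3 : HasDerivAt (fun x : ℝ => x * Real.log x) (Real.log (t + 1) + 1) (t + 1) :=
      Real.hasDerivAt_mul_log (by linarith)
    simpa [Function.comp_def] using h3.comp t hadd
  have := h2.sub h1
  have e : G = (fun x : ℝ => (x + 1) * Real.log (x + 1)) - fun x => x * Real.log x := rfl
  rw [e]
  exact this.congr_deriv (by ring)

lemma G_diff_antitone (y : ℝ) (hy : 0 ≤ y) :
    AntitoneOn (fun t => G (t + y) - G t) (Set.Ici (0 : ℝ)) := by
  apply antitoneOn_of_deriv_nonpos (convex_Ici 0)
  · exact ((G_continuous.comp (continuous_id.add continuous_const)).sub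
      G_continuous).continuousOn
  · intro t ht
    rw [interior_Ici] at ht
    have ht' : 0 < t := ht
    have hty : 0 < t + y := by linarith
    have h1 : HasDerivAt (fun t : ℝ => G (t + y))
        (Real.log (t + y + 1) - Real.log (t + y)) t := by
      have hadd : HasDerivAt (fun x : ℝ => x + y) 1 t := (hasDerivAt_id t).add_const y
      simpa [Function.comp_def] using (G_hasDerivAt hty).comp t hadd
    exact (h1.sub (G_hasDerivAt ht')).differentiableAt.differentiableWithinAt
  · intro t ht
    rw [interior_Ici] at ht
    have ht' : 0 < t := ht
    have hty : 0 < t + y := by linarith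
    have h1 : HasDerivAt (fun t : ℝ => G (t + y))
        (Real.log (t + y + 1) - Real.log (t + y)) t := by
      have hadd : HasDerivAt (fun x : ℝ => x + y) 1 t := (hasDerivAt_id t).add_const y
      simpa [Function.comp_def] using (G_hasDerivAt hty).comp t hadd
    have h2 := (h1.sub (G_hasDerivAt ht')).deriv
    rw [show (fun t => G (t + y) - G t) = (fun t => G (t + y)) - G from rfl, h2]
    -- need: log(t+y+1) - log(t+y) ≤ log(t+1) - log t
    have key : Real.log (t + y + 1) + Real.log t ≤ Real.log (t + 1) + Real.log (t + y) := by
      rw [← Real.log_mul (by linarith) (ne_of_gt ht'),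
          ← Real.log_mul (by linarith) (ne_of_gt hty)]
      apply Real.log_le_log (by positivity)
      nlinarith
    linarith

lemma g_eq (x : ℝ) : g x = G x / Real.log 2 := by
  unfold g G Real.logb
  ring

theorem g_subadditive (x y NB : ℝ) (hx : 0 ≤ x) (hy : 0 ≤ y) (hNB : 0 ≤ NB) :
    g (x + y + NB) - g NB ≤ (g (x + NB) - g NB) + (g (y + NB) - g NB) := by
  have h := G_diff_antitone y hy (Set.mem_Ici.mpr hNB)
    (Set.mem_Ici.mpr (by linarith : (0:ℝ) ≤ NB + x)) (by linarith)
  -- h : G (NB + x + y) - G (NB + x) ≤ G (NB + y) - G NB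
  have hG : G (x + y + NB) + G NB ≤ G (x + NB) + G (y + NB) := by
    have e1 : NB + x + y = x + y + NB := by ring
    have e2 : NB + x = x + NB := by ring
    have e3 : NB + y = y + NB := by ring
    simp only at h
    rw [e1, e2, e3] at h
    linarith
  have hlog2 : 0 < Real.log 2 := Real.log_pos (by norm_num)
  simp only [g_eq]
  rw [div_sub_div_same, div_sub_div_same, div_sub_div_same, ← add_div]
  gcongr
  linarith
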